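/- Let E be the Banach algebra of continuous ℂ-linear endomorphisms of the space of n×n complex matrices, let A ∈ E, and suppose exp(t A) converges to some Λ ∈ E as t → +∞ (t real). Then Λ∘Λ = Λ, A∘Λ = 0, and Λ∘A = 0. -/

import Mathlib

open Filter

attribute [local instance] Matrix.linftyOpNormedAddCommGroup Matrix.linftyOpNormedSpace

instance instMatCLMIsTopologicalRing (n : ℕ) :
    IsTopologicalRing (Matrix (Fin n) (Fin n) ℂ →L[ℂ] Matrix (Fin n) (Fin n) ℂ) :=
  @NonUnitalSeminormedRing.toIsTopologicalRing _
    (@NormedRing.toSeminormedRing _ ContinuousLinearMap.toNormedRing).toNonUnitalSeminormedRing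

set_option maxHeartbeats 1000000 in
/-- if `e^{t A} → Λ` as `t → +∞` then `Λ` is idempotent and
`A Λ = Λ A = 0`. -/
theorem stmt11 (n : ℕ)
    (A Λ : Matrix (Fin n) (Fin n) ℂ →L[ℂ] Matrix (Fin n) (Fin n) ℂ)
    (hΛ : Tendsto (fun t : ℝ => NormedSpace.exp (t • A)) atTop (nhds Λ)) :
    Λ * Λ = Λ ∧ A * Λ = 0 ∧ Λ * A = 0 := by
  letI hR : NormedRing (Matrix (Fin n) (Fin n) ℂ →L[ℂ] Matrix (Fin n) (Fin n) ℂ) :=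
    ContinuousLinearMap.toNormedRing
  letI : NormedAlgebra ℂ (Matrix (Fin n) (Fin n) ℂ →L[ℂ] Matrix (Fin n) (Fin n) ℂ) :=
    ContinuousLinearMap.toNormedAlgebra
  letI : NormedAlgebra ℝ (Matrix (Fin n) (Fin n) ℂ →L[ℂ] Matrix (Fin n) (Fin n) ℂ) :=
    NormedAlgebra.restrictScalars ℝ ℂ _
  letI : NormedAlgebra ℚ (Matrix (Fin n) (Fin n) ℂ →L[ℂ] Matrix (Fin n) (Fin n) ℂ) :=
    NormedAlgebra.restrictScalars ℚ ℂ _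
  haveI : CompleteSpace (Matrix (Fin n) (Fin n) ℂ) := FiniteDimensional.complete ℂ _
  haveI : IsBoundedSMul ℂ (Matrix (Fin n) (Fin n) ℂ →L[ℂ] Matrix (Fin n) (Fin n) ℂ) :=
    NormedSpace.toIsBoundedSMul
  haveI : ContinuousSMul ℂ (Matrix (Fin n) (Fin n) ℂ →L[ℂ] Matrix (Fin n) (Fin n) ℂ) :=
    IsBoundedSMul.continuousSMul
  haveI : @CompleteSpace (Matrix (Fin n) (Fin n) ℂ →L[ℂ] Matrix (Fin n) (Fin n) ℂ)
      hR.toSeminormedRing.toPseudoMetricSpace.toUniformSpace :=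
    @FiniteDimensional.complete ℂ _ _ _ _ _ _ SeminormedAddCommGroup.to_isUniformAddGroup _ _ _
  haveI : IsBoundedSMul ℝ (Matrix (Fin n) (Fin n) ℂ →L[ℂ] Matrix (Fin n) (Fin n) ℂ) :=
    NormedSpace.toIsBoundedSMul
  haveI : ContinuousSMul ℝ (Matrix (Fin n) (Fin n) ℂ →L[ℂ] Matrix (Fin n) (Fin n) ℂ) :=
    IsBoundedSMul.continuousSMul
  have hmul : ∀ s t : ℝ, NormedSpace.exp ((s + t) • A)
      = NormedSpace.exp (s • A) * NormedSpace.exp (t • A) := by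
    intro s t
    have h : (s + t) • A = s • A + t • A := add_smul s t A
    rw [h]
    refine NormedSpace.exp_add_of_commute ?_
    unfold Commute SemiconjBy
    ext x
    simp [ContinuousLinearMap.mul_apply, map_smul]
    ring
  -- exp(s A) * Λ = Λ
  have hleft : ∀ s : ℝ, NormedSpace.exp (s • A) * Λ = Λ := by
    intro s
    have h1 : Tendsto (fun t : ℝ => NormedSpace.exp (s • A) * NormedSpace.exp (t • A))
        atTop (nhds (NormedSpace.exp (s • A) * Λ)) := hΛ.const_mul _
    have h2 : Tendsto (fun t : ℝ => NormedSpace.exp (s • A) * NormedSpace.exp (t • A))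
        atTop (nhds Λ) := by
      have := hΛ.comp (tendsto_atTop_add_const_left atTop s tendsto_id)
      simpa [Function.comp_def, hmul] using this
    exact tendsto_nhds_unique h1 h2
  have hright : ∀ s : ℝ, Λ * NormedSpace.exp (s • A) = Λ := by
    intro s
    have h1 : Tendsto (fun t : ℝ => NormedSpace.exp (t • A) * NormedSpace.exp (s • A))
        atTop (nhds (Λ * NormedSpace.exp (s • A))) := hΛ.mul_const _
    have h2 : Tendsto (fun t : ℝ => NormedSpace.exp (t • A) * NormedSpace.exp (s • A))
        atTop (nhds Λ) := by
      have := hΛ.comp (tendsto_atTop_add_const_right atTop s tendsto_id)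
      simpa [Function.comp_def, fun t => hmul t s] using this
    exact tendsto_nhds_unique h1 h2
  have hidem : Λ * Λ = Λ := by
    have h1 : Tendsto (fun s : ℝ => NormedSpace.exp (s • A) * Λ) atTop (nhds (Λ * Λ)) :=
      hΛ.mul_const _
    have h2 : Tendsto (fun s : ℝ => NormedSpace.exp (s • A) * Λ) atTop (nhds Λ) := by
      have : (fun s : ℝ => NormedSpace.exp (s • A) * Λ) = fun _ => Λ := funext hleft
      rw [this]; exact tendsto_const_nhds
    exact tendsto_nhds_unique h1 h2
  have hexp : (NormedSpace.exp : (Matrix (Fin n) (Fin n) ℂ →L[ℂ] Matrix (Fin n) (Fin n) ℂ) → _) = NormedSpace.exp :=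
    rfl
  have hd : HasDerivAt (fun s : ℝ => NormedSpace.exp (s • A))
      (A * NormedSpace.exp ((0:ℝ) • A)) 0 := by
    rw [hexp]
    exact hasDerivAt_exp_smul_const' A (0:ℝ)
  have hd0 : HasDerivAt (fun s : ℝ => NormedSpace.exp (s • A)) A 0 := by
    have h0 : (0:ℝ) • A = 0 := zero_smul ℝ A
    rw [h0, NormedSpace.exp_zero, mul_one] at hd
    exact hd
  have hd0' : HasDerivAt (fun s : ℝ => NormedSpace.exp (s • A)) A 0 := hd0
  have hAΛ : A * Λ = 0 := by
    have h1 : HasDerivAt (fun s : ℝ => NormedSpace.exp (s • A) * Λ) (A * Λ) 0 :=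
      hd0.mul_const Λ
    have h2 : HasDerivAt (fun s : ℝ => NormedSpace.exp (s • A) * Λ) 0 0 := by
      have : (fun s : ℝ => NormedSpace.exp (s • A) * Λ) = fun _ => Λ := funext hleft
      rw [this]; exact hasDerivAt_const _ _
    exact h1.unique h2
  have hΛA : Λ * A = 0 := by
    have h1 : HasDerivAt (fun s : ℝ => Λ * NormedSpace.exp (s • A)) (Λ * A) 0 :=
      hd0.const_mul Λ
    have h2 : HasDerivAt (fun s : ℝ => Λ * NormedSpace.exp (s • A)) 0 0 := by
      have : (fun s : ℝ => Λ * NormedSpace.exp (s • A)) = fun _ => Λ := funext hright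
      rw [this]; exact hasDerivAt_const _ _
    exact h1.unique h2
  exact ⟨hidem, hAΛ, hΛA⟩
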